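/- Let V, W be finite-dimensional complex vector spaces and let u : V → W and c : W → V be linear maps such that the spectrum of c ∘ u is contained in Σ₁. Set y := ψ(c ∘ u) ∘ c, and let s : V → V be the unique linear map with spectrum contained in Σ₁ such that exp(2πi·s) = y ∘ u + Id_V. Then s = c ∘ u and ψ(s)^{−1} ∘ y = c. -/

import Mathlib

open Complex

noncomputable section

/-- The set Σ: complex numbers `α` with `-1 ≤ Re α ≤ 0`, `Im α ≥ 0` if `Re α = -1`,
and `Im α < 0` if `Re α = 0`. -/
def SigmaSet : Set ℂ :=
  {α : ℂ | -1 ≤ α.re ∧ α.re ≤ 0 ∧ (α.re = -1 → 0 ≤ α.im) ∧ (α.re = 0 → α.im < 0)}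

/-- The set Σ₁ := Σ + 1. -/
def Sigma1 : Set ℂ := {α : ℂ | α - 1 ∈ SigmaSet}

/-- The constant `2πi`. -/
def twoPiI : ℂ := 2 * Real.pi * Complex.I

/-- The exponential `exp(2πi·f)` of an endomorphism `f`. -/
def expEnd {E : Type*} [NormedAddCommGroup E] [NormedSpace ℂ E] (f : E →L[ℂ] E) :
    E →L[ℂ] E :=
  NormedSpace.exp (twoPiI • f)

/-- The power series `ψ(A) := ∑_{k=1}^∞ ((2πi)^k / k!) A^(k-1)`. It satisfies
`A·ψ(A) = ψ(A)·A = exp(2πi·A) − Id`. -/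
def psiEnd {E : Type*} [NormedAddCommGroup E] [NormedSpace ℂ E] (A : E →L[ℂ] E) :
    E →L[ℂ] E :=
  ∑' k : ℕ, ((twoPiI ^ (k + 1) / (Nat.factorial (k + 1) : ℂ)) • A ^ k)

namespace PsiProof


def cf (k : ℕ) : ℂ := twoPiI ^ k / (Nat.factorial k : ℂ)

lemma twoPiI_ne_zero : twoPiI ≠ 0 := by
  unfold twoPiI
  simp [Real.pi_ne_zero, Complex.I_ne_zero, Complex.ofReal_ne_zero]

lemma norm_twoPiI : ‖twoPiI‖ = 2 * Real.pi := by
  unfold twoPiI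
  rw [norm_mul, norm_mul, Complex.norm_I, mul_one, Complex.norm_ofNat,
    Complex.norm_real, Real.norm_of_nonneg Real.pi_pos.le]

lemma cf_zero : cf 0 = 1 := by simp [cf]

lemma norm_cf (k : ℕ) : ‖cf k‖ = (2 * Real.pi) ^ k / (Nat.factorial k : ℝ) := by
  rw [cf, norm_div, norm_pow, norm_twoPiI]
  norm_num

lemma cf_succ_mul (k : ℕ) : cf (k + 1) * ((k + 1 : ℕ) : ℂ) = twoPiI * cf k := by
  have h1 : ((Nat.factorial (k+1) : ℂ)) ≠ 0 := by exact_mod_cast (Nat.factorial_pos (k+1)).ne'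
  have h2 : ((Nat.factorial k : ℂ)) ≠ 0 := by exact_mod_cast (Nat.factorial_pos k).ne'
  have h3 : ((k + 1 : ℕ) : ℂ) ≠ 0 := by exact_mod_cast (Nat.succ_ne_zero k)
  rw [cf, cf, Nat.factorial_succ, Nat.cast_mul, mul_comm ((k+1 : ℕ) : ℂ) _,
    ← div_div, div_mul_cancel₀ _ h3, pow_succ', mul_div_assoc]


lemma cf_one : cf 1 = twoPiI := by
  simp [cf, Nat.factorial]


lemma mem_sigma1 {α : ℂ} (h : α ∈ Sigma1) :
    0 ≤ α.re ∧ α.re ≤ 1 ∧ (α.re = 0 → 0 ≤ α.im) ∧ (α.re = 1 → α.im < 0) := by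
  obtain ⟨h1, h2, h3, h4⟩ := h
  simp only [Complex.sub_re, Complex.one_re, Complex.sub_im, Complex.one_im, sub_zero] at *
  refine ⟨by linarith, by linarith, fun h => h3 (by linarith), fun h => h4 (by linarith)⟩

lemma sigma1_exp_inj {a b : ℂ} (ha : a ∈ Sigma1) (hb : b ∈ Sigma1)
    (h : Complex.exp (twoPiI * a) = Complex.exp (twoPiI * b)) : a = b := by
  obtain ⟨n, hn⟩ := Complex.exp_eq_exp_iff_exists_int.mp h
  have hn' : a = b + n := by
    have h2 : twoPiI * a = twoPiI * (b + n) := by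
      rw [hn]; unfold twoPiI; ring
    exact mul_left_cancel₀ twoPiI_ne_zero h2
  obtain ⟨ha1, ha2, ha3, ha4⟩ := mem_sigma1 ha
  obtain ⟨hb1, hb2, hb3, hb4⟩ := mem_sigma1 hb
  have hre : a.re = b.re + n := by rw [hn']; simp
  have him : a.im = b.im := by rw [hn']; simp
  have hn01 : n = 0 ∨ n = 1 ∨ n = -1 := by
    have c1 : (n : ℝ) ≤ 1 := by linarith
    have c2 : (-1 : ℝ) ≤ (n : ℝ) := by linarith
    have c1' : n ≤ 1 := by exact_mod_cast c1
    have c2' : -1 ≤ n := by exact_mod_cast c2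
    omega
  rcases hn01 with h0 | h1 | hm1
  · rw [hn', h0]; simp
  · exfalso
    rw [h1] at hre
    push_cast at hre
    have hae : a.re = 1 := by linarith
    have hbe : b.re = 0 := by linarith
    have := ha4 hae
    have := hb3 hbe
    linarith
  · exfalso
    rw [hm1] at hre
    push_cast at hre
    have hbe : b.re = 1 := by linarith
    have hae : a.re = 0 := by linarith
    have := hb4 hbe
    have := ha3 hae
    linarith



section Generic
variable {R : Type*} [NormedRing R] [NormedAlgebra ℂ R] [CompleteSpace R]

lemma hasSum_cf_smul_pow (A : R) :
    HasSum (fun k : ℕ => cf k • A ^ k) (NormedSpace.exp (twoPiI • A)) := by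
  have h := NormedSpace.exp_series_hasSum_exp' (𝕂 := ℂ) (twoPiI • A)
  convert h using 2 with k
  rw [smul_pow, smul_smul]
  congr 1
  rw [cf, div_eq_mul_inv, mul_comm]

end Generic

lemma hasSum_cf_mul_pow (z : ℂ) :
    HasSum (fun k : ℕ => cf k * z ^ k) (Complex.exp (twoPiI * z)) := by
  have h := hasSum_cf_smul_pow (R := ℂ) z
  simpa [smul_eq_mul, Complex.exp_eq_exp_ℂ] using h

lemma norm_cf_succ_le (k : ℕ) :
    ‖cf (k + 1)‖ ≤ 2 * Real.pi * ((2 * Real.pi) ^ k / (Nat.factorial k : ℝ)) := by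
  rw [norm_cf]
  calc (2 * Real.pi) ^ (k+1) / (Nat.factorial (k+1) : ℝ)
      ≤ (2 * Real.pi) ^ (k+1) / (Nat.factorial k : ℝ) := by
        gcongr
        omega
    _ = 2 * Real.pi * ((2 * Real.pi) ^ k / (Nat.factorial k : ℝ)) := by
        rw [pow_succ]; ring

lemma summable_cf_succ_mul_pow (z : ℂ) : Summable (fun k : ℕ => cf (k + 1) * z ^ k) := by
  apply Summable.of_norm_bounded
    (g := fun k => 2 * Real.pi * ((2 * Real.pi * ‖z‖) ^ k / (Nat.factorial k : ℝ)))
  · exact (Real.summable_pow_div_factorial _).mul_left _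
  · intro k
    calc ‖cf (k+1) * z ^ k‖ = ‖cf (k+1)‖ * ‖z‖ ^ k := by rw [norm_mul, norm_pow]
      _ ≤ 2 * Real.pi * ((2 * Real.pi) ^ k / (Nat.factorial k : ℝ)) * ‖z‖ ^ k := by
          apply mul_le_mul (norm_cf_succ_le k) (le_refl _) (by positivity) (by positivity)
      _ = 2 * Real.pi * ((2 * Real.pi * ‖z‖) ^ k / (Nat.factorial k : ℝ)) := by
          rw [mul_pow (2 * Real.pi) ‖z‖]; ring

section CLM
variable {E : Type*} [NormedAddCommGroup E] [NormedSpace ℂ E] [CompleteSpace E]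

omit [CompleteSpace E] in
lemma norm_pow_le_of_le {A : E →L[ℂ] E} {C : ℝ} (h : ‖A‖ ≤ C) (h1 : 1 ≤ C) (k : ℕ) :
    ‖A ^ k‖ ≤ C ^ k := by
  induction k with
  | zero => rw [pow_zero, pow_zero]; exact ContinuousLinearMap.norm_id_le
  | succ n ih =>
      rw [pow_succ, pow_succ]
      calc ‖A ^ n * A‖ ≤ ‖A ^ n‖ * ‖A‖ := norm_mul_le _ _
        _ ≤ C ^ n * C :=
            mul_le_mul ih h (norm_nonneg _) (le_trans (by positivity) (le_refl _))

lemma summable_psi_series (A : E →L[ℂ] E) : Summable (fun k : ℕ => cf (k + 1) • A ^ k) := by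
  apply Summable.of_norm_bounded
    (g := fun k => 2 * Real.pi * ((2 * Real.pi * (‖A‖ + 1)) ^ k / (Nat.factorial k : ℝ)))
  · exact (Real.summable_pow_div_factorial _).mul_left _
  · intro k
    have hA : ‖A ^ k‖ ≤ (‖A‖ + 1) ^ k :=
      norm_pow_le_of_le (le_add_of_nonneg_right zero_le_one)
        (le_add_of_nonneg_left (norm_nonneg A)) k
    calc ‖cf (k+1) • A ^ k‖ ≤ ‖cf (k+1)‖ * ‖A ^ k‖ := norm_smul_le (cf (k+1)) (A ^ k)
      _ ≤ 2 * Real.pi * ((2 * Real.pi) ^ k / (Nat.factorial k : ℝ)) * (‖A‖ + 1) ^ k := by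
          apply mul_le_mul (norm_cf_succ_le k) hA (norm_nonneg _) (by positivity)
      _ = 2 * Real.pi * ((2 * Real.pi * (‖A‖ + 1)) ^ k / (Nat.factorial k : ℝ)) := by
          rw [mul_pow (2 * Real.pi) (‖A‖ + 1)]; ring

lemma hasSum_psi (A : E →L[ℂ] E) : HasSum (fun k : ℕ => cf (k + 1) • A ^ k) (psiEnd A) := by
  unfold psiEnd
  have h := (summable_psi_series A).hasSum
  simpa only [cf] using h

lemma hasSum_expEnd (A : E →L[ℂ] E) : HasSum (fun k : ℕ => cf k • A ^ k) (expEnd A) :=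
  hasSum_cf_smul_pow A

lemma psi_mul (A : E →L[ℂ] E) : psiEnd A * A = expEnd A - 1 := by
  have h2 := (hasSum_psi A).mapL ((ContinuousLinearMap.mul ℂ (E →L[ℂ] E)).flip A)
  simp only [ContinuousLinearMap.flip_apply, ContinuousLinearMap.mul_apply',
    smul_mul_assoc, ← pow_succ] at h2
  have h3 := (hasSum_nat_add_iff' (f := fun k : ℕ => cf k • A ^ k) 1).mpr (hasSum_expEnd A)
  simp only [Finset.range_one, Finset.sum_singleton, cf_zero, pow_zero, one_smul] at h3
  exact h2.unique h3

lemma mul_psi (A : E →L[ℂ] E) : A * psiEnd A = expEnd A - 1 := by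
  have h2 := (hasSum_psi A).mapL (ContinuousLinearMap.mul ℂ (E →L[ℂ] E) A)
  simp only [ContinuousLinearMap.mul_apply', mul_smul_comm, ← pow_succ'] at h2
  have h3 := (hasSum_nat_add_iff' (f := fun k : ℕ => cf k • A ^ k) 1).mpr (hasSum_expEnd A)
  simp only [Finset.range_one, Finset.sum_singleton, cf_zero, pow_zero, one_smul] at h3
  exact h2.unique h3

lemma expEnd_eq_one_add (A : E →L[ℂ] E) : expEnd A = 1 + psiEnd A * A := by
  rw [psi_mul]; abel

end CLM


lemma telescope {R : Type*} [Ring R] (A B : R) (k : ℕ) :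
    ∑ p ∈ Finset.range k, A ^ p * (A - B) * B ^ (k - 1 - p) = A ^ k - B ^ k := by
  induction k with
  | zero => simp
  | succ n ih =>
      rw [Finset.sum_range_succ']
      have h0 : A ^ 0 * (A - B) * B ^ (n + 1 - 1 - 0) = (A - B) * B ^ n := by
        simp
      rw [h0]
      have h1 : ∀ p ∈ Finset.range n, A ^ (p + 1) * (A - B) * B ^ (n + 1 - 1 - (p + 1))
          = A * (A ^ p * (A - B) * B ^ (n - 1 - p)) := by
        intro p hp
        have : n + 1 - 1 - (p + 1) = n - 1 - p := by omega
        rw [this, pow_succ']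
        simp [mul_assoc]
      rw [Finset.sum_congr rfl h1, ← Finset.mul_sum, ih]
      rw [mul_sub, sub_mul, pow_succ, pow_succ, ← pow_mul_comm' A n, ← pow_mul_comm' B n]
      abel

lemma pow_mul_eigen {R : Type*} [Ring R] [Algebra ℂ R] {a x : R} {α : ℂ}
    (h : a * x = α • x) (p : ℕ) : a ^ p * x = α ^ p • x := by
  induction p with
  | zero => simp
  | succ n ih =>
      rw [pow_succ', mul_assoc, ih, mul_smul_comm, h, smul_smul, ← pow_succ]

lemma mul_pow_eigen {R : Type*} [Ring R] [Algebra ℂ R] {b x : R} {β : ℂ}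
    (h : x * b = β • x) (q : ℕ) : x * b ^ q = β ^ q • x := by
  induction q with
  | zero => simp
  | succ n ih =>
      rw [pow_succ, ← mul_assoc, ih, smul_mul_assoc, h, smul_smul, ← pow_succ]

lemma mem_spectrum_of_left_eigen {R : Type*} [Ring R] [Algebra ℂ R] {a x : R} {α : ℂ}
    (hx : x ≠ 0) (h : a * x = α • x) : α ∈ spectrum ℂ a := by
  rw [spectrum.mem_iff]
  intro hu
  obtain ⟨v, hv⟩ := hu
  have h0 : (algebraMap ℂ R α - a) * x = 0 := by
    rw [sub_mul, Algebra.algebraMap_eq_smul_one, smul_mul_assoc, one_mul, h, sub_self]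
  rw [← hv] at h0
  have : x = 0 := by
    have h2 := congrArg (fun y => ((v⁻¹ : Rˣ) : R) * y) h0
    simpa [← mul_assoc] using h2
  exact hx this

lemma mem_spectrum_of_right_eigen {R : Type*} [Ring R] [Algebra ℂ R] {b x : R} {β : ℂ}
    (hx : x ≠ 0) (h : x * b = β • x) : β ∈ spectrum ℂ b := by
  rw [spectrum.mem_iff]
  intro hu
  obtain ⟨v, hv⟩ := hu
  have h0 : x * (algebraMap ℂ R β - b) = 0 := by
    rw [mul_sub, Algebra.algebraMap_eq_smul_one, mul_smul_comm, mul_one, h, sub_self]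
  rw [← hv] at h0
  have : x = 0 := by
    have h2 := congrArg (fun y => y * ((v⁻¹ : Rˣ) : R)) h0
    simpa [mul_assoc] using h2
  exact hx this

lemma bound_main {C : ℝ} (hC : 1 ≤ C) (k : ℕ) :
    (2 * Real.pi) ^ k / (Nat.factorial k : ℝ) * (k * C ^ (k - 1))
      ≤ (4 * Real.pi * C) ^ k / (Nat.factorial k : ℝ) := by
  have h1 : (k : ℝ) * C ^ (k - 1) ≤ 2 ^ k * C ^ k := by
    have hk : (k : ℝ) ≤ 2 ^ k := by exact_mod_cast (Nat.lt_two_pow_self (n := k)).le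
    have hc : C ^ (k - 1) ≤ C ^ k := pow_le_pow_right₀ hC (Nat.sub_le k 1)
    exact mul_le_mul hk hc (by positivity) (by positivity)
  calc (2 * Real.pi) ^ k / (Nat.factorial k : ℝ) * (k * C ^ (k - 1))
      ≤ (2 * Real.pi) ^ k / (Nat.factorial k : ℝ) * (2 ^ k * C ^ k) := by
        apply mul_le_mul (le_refl _) h1 (by positivity) (by positivity)
    _ = (4 * Real.pi * C) ^ k / (Nat.factorial k : ℝ) := by
        rw [show (4 : ℝ) * Real.pi * C = (2 * Real.pi) * (2 * C) by ring,
          mul_pow (2 * Real.pi) (2 * C), mul_pow (2:ℝ) C]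
        ring



variable {V : Type*} [NormedAddCommGroup V] [NormedSpace ℂ V] [FiniteDimensional ℂ V]

set_option maxHeartbeats 2000000 in
set_option synthInstance.maxHeartbeats 400000 in
theorem exp_inj (A B : V →L[ℂ] V) (hA : spectrum ℂ A ⊆ Sigma1) (hB : spectrum ℂ B ⊆ Sigma1)
    (h : expEnd A = expEnd B) : A = B := by
  by_contra hne
  set C : ℝ := max ‖A‖ ‖B‖ + 1 with hCdef
  have hC1 : (1:ℝ) ≤ C := by
    have := norm_nonneg A
    have := le_max_left ‖A‖ ‖B‖
    simp only [hCdef]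
    linarith
  have hAC : ‖A‖ ≤ C := by
    have := le_max_left ‖A‖ ‖B‖; simp only [hCdef]; linarith
  have hBC : ‖B‖ ≤ C := by
    have := le_max_right ‖A‖ ‖B‖; simp only [hCdef]; linarith
  set Φk : ℕ → (V →L[ℂ] V) →L[ℂ] (V →L[ℂ] V) := fun k =>
    cf k • ∑ p ∈ Finset.range k,
      ContinuousLinearMap.mulLeftRight ℂ (V →L[ℂ] V) (A ^ p) (B ^ (k - 1 - p)) with hΦkdef
  have hΦk_apply : ∀ k Y, Φk k Y
      = cf k • ∑ p ∈ Finset.range k, A ^ p * Y * B ^ (k - 1 - p) := by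
    intro k Y
    simp only [hΦkdef, ContinuousLinearMap.smul_apply, ContinuousLinearMap.sum_apply,
      ContinuousLinearMap.mulLeftRight_apply]
  have hΦsum : Summable Φk := by
    refine Summable.of_norm_bounded (E := (V →L[ℂ] V) →L[ℂ] (V →L[ℂ] V))
      (g := fun k => (4 * Real.pi * C) ^ k / (Nat.factorial k : ℝ))
      (Real.summable_pow_div_factorial _) ?_
    intro k
    have hsumb : ‖∑ p ∈ Finset.range k,
        ContinuousLinearMap.mulLeftRight ℂ (V →L[ℂ] V) (A ^ p) (B ^ (k - 1 - p))‖
        ≤ (k : ℝ) * C ^ (k - 1) := by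
      calc ‖∑ p ∈ Finset.range k,
          ContinuousLinearMap.mulLeftRight ℂ (V →L[ℂ] V) (A ^ p) (B ^ (k - 1 - p))‖
          ≤ ∑ p ∈ Finset.range k,
            ‖ContinuousLinearMap.mulLeftRight ℂ (V →L[ℂ] V) (A ^ p) (B ^ (k - 1 - p))‖ :=
            norm_sum_le _ _
        _ ≤ ∑ p ∈ Finset.range k, C ^ (k - 1) := by
            apply Finset.sum_le_sum
            intro p hp
            have hp' : p < k := Finset.mem_range.mp hp
            calc ‖ContinuousLinearMap.mulLeftRight ℂ (V →L[ℂ] V) (A ^ p) (B ^ (k - 1 - p))‖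
                ≤ ‖A ^ p‖ * ‖B ^ (k - 1 - p)‖ :=
                  ContinuousLinearMap.opNorm_mulLeftRight_apply_apply_le ℂ _ _ _
              _ ≤ C ^ p * C ^ (k - 1 - p) := by
                  apply mul_le_mul (norm_pow_le_of_le hAC hC1 p)
                    (norm_pow_le_of_le hBC hC1 _) (norm_nonneg _) (by positivity)
              _ = C ^ (k - 1) := by
                  rw [← pow_add]
                  congr 1
                  omega
        _ = (k : ℝ) * C ^ (k - 1) := by
            rw [Finset.sum_const, Finset.card_range, nsmul_eq_mul]
    calc ‖Φk k‖ ≤ ‖cf k‖ * ‖∑ p ∈ Finset.range k,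
          ContinuousLinearMap.mulLeftRight ℂ (V →L[ℂ] V) (A ^ p) (B ^ (k - 1 - p))‖ :=
          norm_smul_le (cf k) (∑ p ∈ Finset.range k,
            ContinuousLinearMap.mulLeftRight ℂ (V →L[ℂ] V) (A ^ p) (B ^ (k - 1 - p)))
      _ ≤ (2 * Real.pi) ^ k / (Nat.factorial k : ℝ) * ((k : ℝ) * C ^ (k - 1)) := by
          rw [norm_cf]
          apply mul_le_mul (le_refl _) hsumb (norm_nonneg _) (by positivity)
      _ ≤ (4 * Real.pi * C) ^ k / (Nat.factorial k : ℝ) := bound_main hC1 k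
  set Φ : (V →L[ℂ] V) →L[ℂ] (V →L[ℂ] V) := ∑' k, Φk k with hΦdef
  have hΦhas : HasSum Φk Φ := hΦsum.hasSum
  have happly : ∀ Y : V →L[ℂ] V, HasSum (fun k => Φk k Y) (Φ Y) := by
    intro Y
    have := hΦhas.mapL (ContinuousLinearMap.apply ℂ (V →L[ℂ] V) Y)
    simpa using this
  set D : V →L[ℂ] V := A - B with hDdef
  have hD : D ≠ 0 := sub_ne_zero.mpr hne
  have hΦD : Φ D = 0 := by
    have h1 : HasSum (fun k => Φk k D) (Φ D) := happly D
    have h2 : (fun k => Φk k D) = fun k => cf k • A ^ k - cf k • B ^ k := by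
      funext k
      rw [hΦk_apply, hDdef, telescope, smul_sub]
    rw [h2] at h1
    have h3 : HasSum (fun k => cf k • A ^ k - cf k • B ^ k) (expEnd A - expEnd B) :=
      (hasSum_expEnd A).sub (hasSum_expEnd B)
    rw [h1.unique h3, h, sub_self]
  set K : Submodule ℂ (V →L[ℂ] V) := LinearMap.ker (Φ : (V →L[ℂ] V) →ₗ[ℂ] (V →L[ℂ] V)) with hKdef
  have hmemK : ∀ Y : V →L[ℂ] V, Y ∈ K ↔ Φ Y = 0 := fun Y => LinearMap.mem_ker
  have hDK : D ∈ K := (hmemK D).mpr hΦD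
  have hcommL : ∀ Y : V →L[ℂ] V, Φ (A * Y) = A * Φ Y := by
    intro Y
    have h1 : HasSum (fun k => Φk k (A * Y)) (Φ (A * Y)) := happly _
    have h2 : HasSum (fun k => A * (Φk k Y)) (A * Φ Y) :=
      (happly Y).mapL (ContinuousLinearMap.mul ℂ (V →L[ℂ] V) A)
    refine h1.unique ?_
    have h3 : (fun k => Φk k (A * Y)) = fun k => A * (Φk k Y) := by
      funext k
      rw [hΦk_apply, hΦk_apply, mul_smul_comm, Finset.mul_sum]
      congr 1
      apply Finset.sum_congr rfl
      intro p _
      simp only [← mul_assoc, pow_mul_comm']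
    rw [h3]
    exact h2
  have hcommR : ∀ Y : V →L[ℂ] V, Φ (Y * B) = Φ Y * B := by
    intro Y
    have h1 : HasSum (fun k => Φk k (Y * B)) (Φ (Y * B)) := happly _
    have h2 : HasSum (fun k => (Φk k Y) * B) (Φ Y * B) :=
      (happly Y).mapL ((ContinuousLinearMap.mul ℂ (V →L[ℂ] V)).flip B)
    refine h1.unique ?_
    have h3 : (fun k => Φk k (Y * B)) = fun k => (Φk k Y) * B := by
      funext k
      rw [hΦk_apply, hΦk_apply, smul_mul_assoc, Finset.sum_mul]
      congr 1
      apply Finset.sum_congr rfl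
      intro p _
      simp only [mul_assoc, ← pow_mul_comm']
    rw [h3]
    exact h2
  -- layer 1 : eigenvector of left multiplication by A on K
  have hKAinv : ∀ Y ∈ K, (LinearMap.mulLeft ℂ A) Y ∈ K := by
    intro Y hY
    rw [LinearMap.mulLeft_apply, hmemK, hcommL, (hmemK Y).mp hY, mul_zero]
  have hKnt : Nontrivial K := by
    refine ⟨⟨D, hDK⟩, 0, fun hc => hD ?_⟩
    simpa [Submodule.mk_eq_zero] using hc
  obtain ⟨α, hα⟩ := Module.End.exists_eigenvalue ((LinearMap.mulLeft ℂ A).restrict hKAinv)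
  obtain ⟨v1, hv1⟩ := hα.exists_hasEigenvector
  have hX₁ne : (v1 : V →L[ℂ] V) ≠ 0 := by
    simpa [Submodule.coe_eq_zero] using hv1.2
  have hX₁ : A * (v1 : V →L[ℂ] V) = α • (v1 : V →L[ℂ] V) := by
    have h4 := hv1.apply_eq_smul
    have h5 := congrArg Subtype.val h4
    simpa [LinearMap.restrict_apply, LinearMap.mulLeft_apply] using h5
  -- layer 2
  set K2 : Submodule ℂ (V →L[ℂ] V) :=
    K ⊓ Module.End.eigenspace (LinearMap.mulLeft ℂ A) α with hK2def
  have hmemK2 : ∀ Y : V →L[ℂ] V, Y ∈ K2 ↔ (Φ Y = 0 ∧ A * Y = α • Y) := by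
    intro Y
    rw [hK2def, Submodule.mem_inf, hmemK, Module.End.mem_eigenspace_iff,
      LinearMap.mulLeft_apply]
  have hX₁K2 : (v1 : V →L[ℂ] V) ∈ K2 := (hmemK2 _).mpr ⟨(hmemK _).mp v1.2, hX₁⟩
  have hK2inv : ∀ Y ∈ K2, (LinearMap.mulRight ℂ B) Y ∈ K2 := by
    intro Y hY
    obtain ⟨hY1, hY2⟩ := (hmemK2 Y).mp hY
    rw [LinearMap.mulRight_apply, hmemK2]
    constructor
    · rw [hcommR, hY1, zero_mul]
    · rw [← mul_assoc, hY2, smul_mul_assoc]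
  have hK2nt : Nontrivial K2 := by
    refine ⟨⟨(v1 : V →L[ℂ] V), hX₁K2⟩, 0, fun hc => hX₁ne ?_⟩
    simpa [Submodule.mk_eq_zero] using hc
  obtain ⟨β, hβ⟩ := Module.End.exists_eigenvalue ((LinearMap.mulRight ℂ B).restrict hK2inv)
  obtain ⟨v2, hv2⟩ := hβ.exists_hasEigenvector
  set X₀ : V →L[ℂ] V := (v2 : V →L[ℂ] V) with hX₀def
  have hX₀ne : X₀ ≠ 0 := by
    simpa [hX₀def, Submodule.coe_eq_zero] using hv2.2
  have hX₀B : X₀ * B = β • X₀ := by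
    have h4 := hv2.apply_eq_smul
    have h5 := congrArg Subtype.val h4
    simpa [hX₀def, LinearMap.restrict_apply, LinearMap.mulRight_apply] using h5
  obtain ⟨hX₀K, hX₀A⟩ := (hmemK2 X₀).mp v2.2
  -- spectra membership
  have haS : α ∈ Sigma1 := hA (mem_spectrum_of_left_eigen hX₀ne hX₀A)
  have hbS : β ∈ Sigma1 := hB (mem_spectrum_of_right_eigen hX₀ne hX₀B)
  -- gamma
  set γ : ℕ → ℂ := fun k => cf k * ∑ p ∈ Finset.range k, α ^ p * β ^ (k - 1 - p) with hγdef
  set C₂ : ℝ := max ‖α‖ ‖β‖ + 1 with hC₂def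
  have hC₂1 : (1:ℝ) ≤ C₂ := by
    have := norm_nonneg α
    have := le_max_left ‖α‖ ‖β‖
    simp only [hC₂def]; linarith
  have hαC : ‖α‖ ≤ C₂ := by
    have := le_max_left ‖α‖ ‖β‖; simp only [hC₂def]; linarith
  have hβC : ‖β‖ ≤ C₂ := by
    have := le_max_right ‖α‖ ‖β‖; simp only [hC₂def]; linarith
  have hγsum : Summable γ := by
    apply Summable.of_norm_bounded (g := fun k => (4 * Real.pi * C₂) ^ k / (Nat.factorial k : ℝ))
      (Real.summable_pow_div_factorial _)
    intro k
    have hsumb : ‖∑ p ∈ Finset.range k, α ^ p * β ^ (k - 1 - p)‖ ≤ (k : ℝ) * C₂ ^ (k - 1) := by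
      calc ‖∑ p ∈ Finset.range k, α ^ p * β ^ (k - 1 - p)‖
          ≤ ∑ p ∈ Finset.range k, ‖α ^ p * β ^ (k - 1 - p)‖ := norm_sum_le _ _
        _ ≤ ∑ p ∈ Finset.range k, C₂ ^ (k - 1) := by
            apply Finset.sum_le_sum
            intro p hp
            rw [norm_mul, norm_pow, norm_pow]
            calc ‖α‖ ^ p * ‖β‖ ^ (k - 1 - p)
                ≤ C₂ ^ p * C₂ ^ (k - 1 - p) := by
                  apply mul_le_mul (pow_le_pow_left₀ (norm_nonneg _) hαC p)
                    (pow_le_pow_left₀ (norm_nonneg _) hβC _) (by positivity) (by positivity)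
              _ = C₂ ^ (k - 1) := by
                  rw [← pow_add]; congr 1; have := Finset.mem_range.mp hp; omega
        _ = (k : ℝ) * C₂ ^ (k - 1) := by
            rw [Finset.sum_const, Finset.card_range, nsmul_eq_mul]
    calc ‖γ k‖ = ‖cf k‖ * ‖∑ p ∈ Finset.range k, α ^ p * β ^ (k - 1 - p)‖ := norm_mul _ _
      _ ≤ (2 * Real.pi) ^ k / (Nat.factorial k : ℝ) * ((k : ℝ) * C₂ ^ (k - 1)) := by
          rw [norm_cf]
          apply mul_le_mul (le_refl _) hsumb (norm_nonneg _) (by positivity)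
      _ ≤ (4 * Real.pi * C₂) ^ k / (Nat.factorial k : ℝ) := bound_main hC₂1 k
  have hΦX₀ : Φ X₀ = (∑' k, γ k) • X₀ := by
    have h1 : HasSum (fun k => Φk k X₀) (Φ X₀) := happly X₀
    have h2 : (fun k => Φk k X₀) = fun k => γ k • X₀ := by
      funext k
      rw [hΦk_apply, hγdef]
      have h3 : ∀ p ∈ Finset.range k,
          A ^ p * X₀ * B ^ (k - 1 - p) = (α ^ p * β ^ (k - 1 - p)) • X₀ := by
        intro p _
        rw [mul_assoc, mul_pow_eigen hX₀B, mul_smul_comm, pow_mul_eigen hX₀A, smul_smul,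
          mul_comm]
      rw [Finset.sum_congr rfl h3, ← Finset.sum_smul, smul_smul]
    rw [h2] at h1
    exact h1.unique ((hγsum.hasSum).smul_const X₀)
  have hg : (∑' k, γ k) = 0 := by
    have h0 : (∑' k, γ k) • X₀ = 0 := by rw [← hΦX₀]; exact (hmemK X₀).mp hX₀K
    rcases smul_eq_zero.mp h0 with h | h
    · exact h
    · exact absurd h hX₀ne
  -- final contradiction
  rcases eq_or_ne α β with heq | hne2
  · -- α = β
    have hγ' : γ = fun k => cf k * (((k : ℕ) : ℂ) * α ^ (k - 1)) := by
      funext k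
      have h3 : ∀ p ∈ Finset.range k, α ^ p * β ^ (k - 1 - p) = α ^ (k - 1) := by
        intro p hp
        rw [← heq, ← pow_add]
        congr 1
        have := Finset.mem_range.mp hp; omega
      rw [hγdef]
      simp only []
      rw [Finset.sum_congr rfl h3, Finset.sum_const, Finset.card_range, nsmul_eq_mul]
    have hsum' : Summable (fun k => cf k * (((k : ℕ) : ℂ) * α ^ (k - 1))) := hγ' ▸ hγsum
    have ht := Summable.tsum_eq_zero_add hsum'
    have h00 : cf 0 * (((0 : ℕ) : ℂ) * α ^ (0 - 1)) = 0 := by simp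
    have hshift : (fun k : ℕ => cf (k + 1) * (((k + 1 : ℕ) : ℂ) * α ^ (k + 1 - 1)))
        = fun k : ℕ => twoPiI * (cf k * α ^ k) := by
      funext k
      have := cf_succ_mul k
      calc cf (k + 1) * (((k + 1 : ℕ) : ℂ) * α ^ (k + 1 - 1))
          = (cf (k + 1) * ((k + 1 : ℕ) : ℂ)) * α ^ k := by rw [← mul_assoc, Nat.add_sub_cancel]
        _ = (twoPiI * cf k) * α ^ k := by rw [this]
        _ = twoPiI * (cf k * α ^ k) := by rw [mul_assoc]
    have hval : (∑' k, γ k) = twoPiI * Complex.exp (twoPiI * α) := by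
      rw [hγ', ht, h00, zero_add, hshift, tsum_mul_left, (hasSum_cf_mul_pow α).tsum_eq]
    rw [hval] at hg
    exact (mul_ne_zero twoPiI_ne_zero (Complex.exp_ne_zero _)) hg
  · -- α ≠ β
    have h5 : (∑' k, γ k) * (α - β) = Complex.exp (twoPiI * α) - Complex.exp (twoPiI * β) := by
      rw [← tsum_mul_right]
      have h6 : (fun k => γ k * (α - β)) = fun k => cf k * α ^ k - cf k * β ^ k := by
        funext k
        rw [hγdef, mul_assoc, geom_sum₂_mul, mul_sub]
      rw [h6]
      exact ((hasSum_cf_mul_pow α).sub (hasSum_cf_mul_pow β)).tsum_eq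
    rw [hg, zero_mul] at h5
    have h7 : Complex.exp (twoPiI * α) = Complex.exp (twoPiI * β) := by
      have := h5.symm
      linear_combination this
    exact hne2 (sigma1_exp_inj haS hbS h7)



-- scalar psi value nonzero on Sigma1
lemma psiC_ne_zero {α : ℂ} (hα : α ∈ Sigma1) : (∑' k : ℕ, cf (k + 1) * α ^ k) ≠ 0 := by
  rcases eq_or_ne α 0 with h0 | h0
  · have : (∑' k : ℕ, cf (k + 1) * α ^ k) = cf 1 := by
      rw [h0]
      rw [tsum_eq_single 0]
      · simp
      · intro b hb
        rw [zero_pow hb, mul_zero]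
    rw [this, cf_one]
    exact twoPiI_ne_zero
  · intro hg
    have hmul : α * (∑' k : ℕ, cf (k + 1) * α ^ k)
        = Complex.exp (twoPiI * α) - 1 := by
      rw [← tsum_mul_left]
      have h1 : (fun k : ℕ => α * (cf (k + 1) * α ^ k)) = fun k : ℕ => cf (k + 1) * α ^ (k + 1) := by
        funext k
        rw [pow_succ]
        ring
      rw [h1]
      have h2 := Summable.tsum_eq_zero_add (hasSum_cf_mul_pow α).summable
      rw [cf_zero, pow_zero, mul_one] at h2
      rw [(hasSum_cf_mul_pow α).tsum_eq] at h2
      -- h2 : exp (2πiα) = 1 + ∑' k, cf (k+1) * α^(k+1)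
      rw [h2]
      ring
    rw [hg, mul_zero] at hmul
    have hexp : Complex.exp (twoPiI * α) = 1 := by linear_combination -hmul
    obtain ⟨n, hn⟩ := Complex.exp_eq_one_iff.mp hexp
    have hα_eq : α = (n : ℂ) := by
      have h3 : twoPiI * α = twoPiI * (n : ℂ) := by
        rw [hn]; unfold twoPiI; ring
      exact mul_left_cancel₀ twoPiI_ne_zero h3
    obtain ⟨hs1, hs2, _, hs4⟩ := mem_sigma1 hα
    rw [hα_eq] at hs1 hs2 hs4 h0
    simp only [Complex.intCast_re, Complex.intCast_im] at hs1 hs2 hs4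
    have hn0 : n ≠ 0 := by
      intro hc; rw [hc] at h0; exact h0 (by norm_num)
    have hn1 : n = 1 := by
      have c1 : 0 ≤ n := by exact_mod_cast hs1
      have c2 : n ≤ 1 := by exact_mod_cast hs2
      omega
    rw [hn1] at hs4
    norm_num at hs4

variable {V : Type*} [NormedAddCommGroup V] [NormedSpace ℂ V] [FiniteDimensional ℂ V]

lemma pow_apply_eigen (A : V →L[ℂ] V) {v : V} {α : ℂ} (h : A v = α • v) (k : ℕ) :
    (A ^ k) v = α ^ k • v := by
  induction k with
  | zero => simp
  | succ n ih =>
      rw [pow_succ', ContinuousLinearMap.mul_apply, ih, map_smul, h, smul_smul, ← pow_succ]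

lemma psi_isUnit (A : V →L[ℂ] V) (hA : spectrum ℂ A ⊆ Sigma1) : IsUnit (psiEnd A) := by
  -- injectivity
  have hker : LinearMap.ker (psiEnd A : V →ₗ[ℂ] V) = ⊥ := by
    by_contra hne
    have hcomm : A * psiEnd A = psiEnd A * A := by rw [psi_mul, mul_psi]
    have hKinv : ∀ v ∈ LinearMap.ker (psiEnd A : V →ₗ[ℂ] V), (A : V →ₗ[ℂ] V) v ∈ LinearMap.ker (psiEnd A : V →ₗ[ℂ] V) := by
      intro v hv
      rw [LinearMap.mem_ker] at hv ⊢
      have h1 : psiEnd A (A v) = (psiEnd A * A) v := rfl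
      simp only [ContinuousLinearMap.coe_coe] at hv ⊢
      rw [h1, ← hcomm, ContinuousLinearMap.mul_apply, hv, map_zero]
    have hnt : Nontrivial (LinearMap.ker (psiEnd A : V →ₗ[ℂ] V)) := by
      rcases Submodule.ne_bot_iff _ |>.mp hne with ⟨v, hv, hvne⟩
      exact ⟨⟨v, hv⟩, 0, fun hc => hvne (by simpa [Submodule.mk_eq_zero] using hc)⟩
    obtain ⟨α, hα⟩ :=
      Module.End.exists_eigenvalue (((A : V →ₗ[ℂ] V)).restrict hKinv)
    obtain ⟨v, hv⟩ := hα.exists_hasEigenvector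
    have hvne : (v : V) ≠ 0 := by simpa [Submodule.coe_eq_zero] using hv.2
    have hAv : A (v : V) = α • (v : V) := by
      have h4 := hv.apply_eq_smul
      have h5 := congrArg Subtype.val h4
      simpa [LinearMap.restrict_apply] using h5
    -- α is in the spectrum of A
    have hαspec : α ∈ spectrum ℂ A := by
      rw [spectrum.mem_iff]
      intro hu
      obtain ⟨w, hw⟩ := hu
      have h6 : (algebraMap ℂ (V →L[ℂ] V) α - A) (v : V) = 0 := by
        rw [ContinuousLinearMap.sub_apply, hAv, Algebra.algebraMap_eq_smul_one,
          ContinuousLinearMap.smul_apply, ContinuousLinearMap.one_apply, sub_self]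
      rw [← hw] at h6
      have h7 : ((w⁻¹ : (V →L[ℂ] V)ˣ) : V →L[ℂ] V) ((w : V →L[ℂ] V) (v : V)) = 0 := by
        rw [h6, map_zero]
      have h8 : ((w⁻¹ : (V →L[ℂ] V)ˣ) : V →L[ℂ] V) ((w : V →L[ℂ] V) (v : V)) = (v : V) := by
        have := Units.inv_mul w
        calc ((w⁻¹ : (V →L[ℂ] V)ˣ) : V →L[ℂ] V) ((w : V →L[ℂ] V) (v : V))
            = (((w⁻¹ : (V →L[ℂ] V)ˣ) : V →L[ℂ] V) * (w : V →L[ℂ] V)) (v : V) := rfl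
          _ = (v : V) := by rw [this, ContinuousLinearMap.one_apply]
      exact hvne (h8 ▸ h7)
    have hαS : α ∈ Sigma1 := hA hαspec
    -- compute psiEnd A v
    have h9 : psiEnd A (v : V) = (∑' k : ℕ, cf (k + 1) * α ^ k) • (v : V) := by
      have h10 := (hasSum_psi A).mapL (ContinuousLinearMap.apply ℂ V (v : V))
      have h11 : (fun k => (ContinuousLinearMap.apply ℂ V (v : V)) (cf (k + 1) • A ^ k))
          = fun k => (cf (k + 1) * α ^ k) • (v : V) := by
        funext k
        simp only [ContinuousLinearMap.apply_apply, ContinuousLinearMap.smul_apply]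
        rw [pow_apply_eigen A hAv k, smul_smul]
      rw [h11] at h10
      have h12 : HasSum (fun k => (cf (k + 1) * α ^ k) • (v : V))
          ((∑' k : ℕ, cf (k + 1) * α ^ k) • (v : V)) :=
        (summable_cf_succ_mul_pow α).hasSum.smul_const _
      have := h10.unique h12
      simpa using this
    have h13 : psiEnd A (v : V) = 0 := LinearMap.mem_ker.mp v.2
    rw [h13] at h9
    rcases smul_eq_zero.mp h9.symm with hc | hc
    · exact psiC_ne_zero hαS hc
    · exact hvne hc
  -- from injectivity to unit
  have hinj : Function.Injective (psiEnd A) := by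
    intro x y hxy
    have hm : x - y ∈ LinearMap.ker (psiEnd A : V →ₗ[ℂ] V) := by
      rw [LinearMap.mem_ker, map_sub, ContinuousLinearMap.coe_coe, hxy, sub_self]
    rw [hker, Submodule.mem_bot] at hm
    exact sub_eq_zero.mp hm
  have hsurj : Function.Surjective (psiEnd A) :=
    (LinearMap.injective_iff_surjective
      (f := ((psiEnd A : V →L[ℂ] V) : V →ₗ[ℂ] V))).mp hinj
  have hrange : LinearMap.range (psiEnd A : V →ₗ[ℂ] V) = ⊤ := LinearMap.range_eq_top.mpr hsurj
  let e : V ≃L[ℂ] V := ContinuousLinearEquiv.ofBijective (psiEnd A) hker hrange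
  refine ⟨⟨psiEnd A, (e.symm : V →L[ℂ] V), ?_, ?_⟩, rfl⟩
  · ext v
    have : (e : V →L[ℂ] V) = psiEnd A := rfl
    simp only [ContinuousLinearMap.mul_apply, ContinuousLinearMap.one_apply]
    rw [← this]
    exact e.apply_symm_apply v
  · ext v
    have : (e : V →L[ℂ] V) = psiEnd A := rfl
    simp only [ContinuousLinearMap.mul_apply, ContinuousLinearMap.one_apply]
    rw [← this]
    exact e.symm_apply_apply v


end PsiProof

/-- Let the spectrum of `c∘u` be contained in Σ₁, set `y := ψ(c∘u) ∘ c`, and let `s` be the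
unique endomorphism with spectrum in Σ₁ and `exp(2πi·s) = y∘u + Id`. Then `s = c∘u` and
`ψ(s)⁻¹ ∘ y = c`. -/
theorem s_eq_cu_and_recover_c
    {V W : Type*} [NormedAddCommGroup V] [NormedSpace ℂ V] [FiniteDimensional ℂ V]
    [NormedAddCommGroup W] [NormedSpace ℂ W] [FiniteDimensional ℂ W]
    (u : V →L[ℂ] W) (c : W →L[ℂ] V)
    (hcu : spectrum ℂ (c.comp u) ⊆ Sigma1)
    (s : V →L[ℂ] V) (hs : spectrum ℂ s ⊆ Sigma1)
    (hes : expEnd s = ((psiEnd (c.comp u)).comp c).comp u + ContinuousLinearMap.id ℂ V) :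
    s = c.comp u ∧
    (Ring.inverse (psiEnd s)).comp ((psiEnd (c.comp u)).comp c) = c := by
  have hexp : expEnd s = expEnd (c.comp u) := by
    rw [hes]
    have h1 : ((psiEnd (c.comp u)).comp c).comp u = psiEnd (c.comp u) * (c.comp u) := by
      rw [ContinuousLinearMap.mul_def, ContinuousLinearMap.comp_assoc]
    rw [h1, PsiProof.psi_mul]
    have h2 : (ContinuousLinearMap.id ℂ V) = (1 : V →L[ℂ] V) := rfl
    rw [h2]
    abel
  have hseq : s = c.comp u := PsiProof.exp_inj s (c.comp u) hs hcu hexp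
  refine ⟨hseq, ?_⟩
  rw [hseq]
  have hunit := PsiProof.psi_isUnit (c.comp u) hcu
  rw [← ContinuousLinearMap.comp_assoc]
  have h3 : (Ring.inverse (psiEnd (c.comp u))).comp (psiEnd (c.comp u))
      = (1 : V →L[ℂ] V) := by
    rw [← ContinuousLinearMap.mul_def]
    exact Ring.inverse_mul_cancel _ hunit
  rw [h3]
  ext w
  simp
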